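/- Let (X,d) be a compact metric space with no isolated points which is generalized homogeneous, and let Λ be a finite nonempty set. Then the set of all F ∈ H_Λ(X) having the weak shadowing property on ℤ is residual (contains a countable intersection of open dense sets) in the complete metric space (H_Λ(X), ρ); i.e., weak shadowing is a generic property in H_Λ(X). -/

import Mathlib

/-- The metric `ρ` on the space `H_Λ(X)` of IFS of homeomorphisms:
`ρ(F,G) = sup_{λ,x} max (dist (F λ x) (G λ x)) (dist (F λ ⁻¹ x) (G λ ⁻¹ x))`. -/
noncomputable def rhoIFS {X Λ : Type*} [MetricSpace X] (f g : Λ → X ≃ₜ X) : ℝ :=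
  ⨆ p : Λ × X, max (dist (f p.1 p.2) (g p.1 p.2))
    (dist ((f p.1).symm p.2) ((g p.1).symm p.2))

/-- A two-sided sequence `x : ℤ → X` is an orbit of the IFS of homeomorphisms `f`. -/
def IsOrbitZ {X Λ : Type*} [TopologicalSpace X] (f : Λ → X ≃ₜ X) (x : ℤ → X) : Prop :=
  ∃ σ : ℤ → Λ, ∀ n : ℤ, x (n + 1) = f (σ n) (x n)

/-- Given a finite open cover `V`, `JFam V f` is the family of sets `L` of indices such
that some orbit of `f` meets `V j` for every `j ∈ L`. -/
def JFam {X Λ : Type*} [TopologicalSpace X] {k : ℕ} (V : Fin k → Set X) (f : Λ → X ≃ₜ X) :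
    Set (Set (Fin k)) :=
  {L | ∃ x : ℤ → X, IsOrbitZ f x ∧ ∀ j ∈ L, ∃ n : ℤ, x n ∈ V j}

/-- `δ`-pseudo orbit on `ℤ` of an IFS of homeomorphisms. -/
def IsPseudoOrbitZ {X Λ : Type*} [MetricSpace X] (f : Λ → X ≃ₜ X) (δ : ℝ)
    (x : ℤ → X) : Prop :=
  ∃ σ : ℤ → Λ, ∀ n : ℤ, dist (x (n + 1)) (f (σ n) (x n)) < δ

/-- Weak shadowing property on `ℤ` for an IFS of homeomorphisms. -/
def WeakShadowingZ {X Λ : Type*} [MetricSpace X] (f : Λ → X ≃ₜ X) : Prop :=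
  ∀ ε > (0 : ℝ), ∃ δ > (0 : ℝ), ∀ x : ℤ → X, IsPseudoOrbitZ f δ x →
    ∃ y : ℤ → X, IsOrbitZ f y ∧ ∀ n : ℤ, ∃ m : ℤ, dist (y n) (x m) < ε

/-- `X` is generalized homogeneous. -/
def GenHomogeneous (X : Type*) [MetricSpace X] : Prop :=
  ∀ ε > (0 : ℝ), ∃ δ > (0 : ℝ), ∀ (n : ℕ) (x y : Fin n → X),
    Function.Injective x → Function.Injective y →
    (∀ i, dist (x i) (y i) ≤ δ) →
    ∃ h : X ≃ₜ X, (∀ i, h (x i) = y i) ∧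
      ∀ z : X, max (dist (h z) z) (dist (h.symm z) z) ≤ ε

section Aux

open Metric Set

set_option linter.unusedSectionVars false

variable {X Λ : Type*} [MetricSpace X] [CompactSpace X] [Finite Λ] [Nonempty Λ]

lemma rho_bdd (f g : Λ → X ≃ₜ X) :
    BddAbove (Set.range fun p : Λ × X => max (dist (f p.1 p.2) (g p.1 p.2))
      (dist ((f p.1).symm p.2) ((g p.1).symm p.2))) := by
  refine ⟨Metric.diam (Set.univ : Set X), ?_⟩
  rintro t ⟨p, rfl⟩
  exact max_le (Metric.dist_le_diam_of_mem isCompact_univ.isBounded (Set.mem_univ _) (Set.mem_univ _))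
    (Metric.dist_le_diam_of_mem isCompact_univ.isBounded (Set.mem_univ _) (Set.mem_univ _))

lemma max_le_rho (f g : Λ → X ≃ₜ X) (l : Λ) (u : X) :
    max (dist (f l u) (g l u)) (dist ((f l).symm u) ((g l).symm u)) ≤ rhoIFS f g :=
  le_ciSup (rho_bdd f g) (l, u)

lemma dist_le_rho (f g : Λ → X ≃ₜ X) (l : Λ) (u : X) :
    dist (f l u) (g l u) ≤ rhoIFS f g :=
  le_trans (le_max_left _ _) (max_le_rho f g l u)

lemma dist_symm_le_rho (f g : Λ → X ≃ₜ X) (l : Λ) (u : X) :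
    dist ((f l).symm u) ((g l).symm u) ≤ rhoIFS f g :=
  le_trans (le_max_right _ _) (max_le_rho f g l u)

lemma rho_self (hne : Nonempty X) (f : Λ → X ≃ₜ X) : rhoIFS f f = 0 := by
  haveI : Nonempty (Λ × X) := ⟨⟨Classical.arbitrary Λ, Classical.arbitrary X⟩⟩
  simp [rhoIFS]

lemma rho_le_of_forall (hne : Nonempty X) (f g : Λ → X ≃ₜ X) {c : ℝ}
    (h : ∀ (l : Λ) (u : X), max (dist (f l u) (g l u))
      (dist ((f l).symm u) ((g l).symm u)) ≤ c) : rhoIFS f g ≤ c := by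
  haveI : Nonempty (Λ × X) := ⟨⟨Classical.arbitrary Λ, Classical.arbitrary X⟩⟩
  exact ciSup_le fun p => h p.1 p.2

lemma rho_triangle (hne : Nonempty X) (f g h : Λ → X ≃ₜ X) :
    rhoIFS f h ≤ rhoIFS f g + rhoIFS g h := by
  refine rho_le_of_forall hne f h fun l u => max_le ?_ ?_
  · exact (dist_triangle _ (g l u) _).trans
      (add_le_add (dist_le_rho f g l u) (dist_le_rho g h l u))
  · exact (dist_triangle _ ((g l).symm u) _).trans
      (add_le_add (dist_symm_le_rho f g l u) (dist_symm_le_rho g h l u))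

/-- The family of index sets `L` such that `f` has an orbit inside
`⋃_{j ∈ L} closedBall (pt j) r`. -/
def famC {k : ℕ} (pt : Fin k → X) (r : ℝ) (f : Λ → X ≃ₜ X) : Set (Finset (Fin k)) :=
  {L | ∃ y : ℤ → X, IsOrbitZ f y ∧ ∀ n : ℤ, ∃ j ∈ L, dist (y n) (pt j) ≤ r}

lemma famC_limit {k : ℕ} (pt : Fin k → X) (r : ℝ) (f : Λ → X ≃ₜ X) (L : Finset (Fin k))
    (H : ∀ m : ℕ, ∃ g, rhoIFS f g < 1/(m+1) ∧ L ∈ famC pt r g) : L ∈ famC pt r f := by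
  choose g hg hmem using H
  choose y hy hyin using hmem
  choose σ hσ using hy
  -- the closed "trap" set
  set D : Set (ℤ → X) := {z | ∀ n : ℤ, ∃ j ∈ L, dist (z n) (pt j) ≤ r} with hD
  have hDclosed : IsClosed D := by
    have : D = ⋂ n : ℤ, (fun z : ℤ → X => z n) ⁻¹' (⋃ j ∈ L, Metric.closedBall (pt j) r) := by
      ext z; simp [hD, Metric.mem_closedBall]
    rw [this]
    refine isClosed_iInter fun n => IsClosed.preimage (continuous_apply n) ?_
    exact L.finite_toSet.isClosed_biUnion fun j _ => Metric.isClosed_closedBall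
  -- approximate-orbit closed sets
  set C : ℕ → ℤ → Set (ℤ → X) := fun m n =>
    ⋃ l : Λ, {z : ℤ → X | dist (z (n+1)) (f l (z n)) ≤ 1/(m+1)} with hC
  have hCclosed : ∀ m n, IsClosed (C m n) := by
    intro m n
    refine isClosed_iUnion_of_finite fun l => ?_
    exact isClosed_le (Continuous.dist (continuous_apply (n+1))
      ((f l).continuous.comp (continuous_apply n))) continuous_const
  set E : ℕ → Set (ℤ → X) := fun m => closure ((fun i => y i) '' Set.Ici m) with hE
  have hEsub : ∀ m, E m ⊆ D ∩ ⋂ n : ℤ, C m n := by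
    intro m
    refine closure_minimal ?_ (hDclosed.inter (isClosed_iInter fun n => hCclosed m n))
    rintro _ ⟨i, hi, rfl⟩
    refine ⟨hyin i, ?_⟩
    refine Set.mem_iInter.2 fun n => Set.mem_iUnion.2 ⟨σ i n, ?_⟩
    have h1 : dist (y i (n+1)) (f (σ i n) (y i n)) ≤ rhoIFS f (g i) := by
      rw [hσ i n, dist_comm]
      exact dist_le_rho f (g i) (σ i n) (y i n)
    have hmi : (m:ℝ) ≤ i := Nat.cast_le.mpr hi
    have h2 : (1 : ℝ)/(i+1) ≤ 1/(m+1) := by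
      apply one_div_le_one_div_of_le
      · positivity
      · linarith
    exact h1.trans ((hg i).le.trans h2)
  have hEanti : ∀ m, E (m+1) ⊆ E m := fun m =>
    closure_mono (Set.image_mono (Set.Ici_subset_Ici.mpr (Nat.le_succ m)))
  have hEne : ∀ m, (E m).Nonempty := fun m =>
    ⟨y m, subset_closure ⟨m, Set.self_mem_Ici, rfl⟩⟩
  have hEclosed : ∀ m, IsClosed (E m) := fun _ => isClosed_closure
  obtain ⟨Y, hY⟩ := IsCompact.nonempty_iInter_of_sequence_nonempty_isCompact_isClosed E
    hEanti hEne (hEclosed 0).isCompact hEclosed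
  have hYm : ∀ m, Y ∈ E m := fun m => Set.mem_iInter.mp hY m
  have hYD : Y ∈ D := (hEsub 0 (hYm 0)).1
  have horb : ∀ n : ℤ, ∃ l, Y (n+1) = f l (Y n) := by
    intro n
    have hall : ∀ m : ℕ, ∃ l, dist (Y (n+1)) (f l (Y n)) ≤ 1/(m+1) := by
      intro m
      have h3 := Set.mem_iInter.mp (hEsub m (hYm m)).2 n
      simpa [hC] using h3
    choose φ hφ using hall
    obtain ⟨l, hl⟩ := Finite.exists_infinite_fiber φ
    have hinf : (φ ⁻¹' {l}).Infinite := Set.infinite_coe_iff.mp hl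
    have hdz : dist (Y (n+1)) (f l (Y n)) ≤ 0 := by
      by_contra hpos
      push_neg at hpos
      obtain ⟨m₀, hm₀⟩ := exists_nat_one_div_lt hpos
      obtain ⟨m, hm, hm'⟩ := hinf.exists_gt m₀
      have h1 := hφ m
      rw [Set.mem_preimage, Set.mem_singleton_iff] at hm
      rw [hm] at h1
      have hc : (1:ℝ)/(m+1) ≤ 1/(m₀+1) := by
        apply one_div_le_one_div_of_le
        · positivity
        · have : (m₀:ℝ) ≤ m := Nat.cast_le.mpr hm'.le
          linarith
      linarith
    exact ⟨l, dist_le_zero.mp hdz⟩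
  choose σ' hσ' using horb
  exact ⟨Y, ⟨σ', hσ'⟩, hYD⟩

lemma famC_usc {k : ℕ} (pt : Fin k → X) (r : ℝ) (f : Λ → X ≃ₜ X) :
    ∃ η > (0:ℝ), ∀ g, rhoIFS f g < η → famC pt r g ⊆ famC pt r f := by
  classical
  have key : ∀ L : Finset (Fin k), ∃ η > (0:ℝ), ∀ g, rhoIFS f g < η →
      L ∈ famC pt r g → L ∈ famC pt r f := by
    intro L
    by_cases hL : L ∈ famC pt r f
    · exact ⟨1, one_pos, fun g _ _ => hL⟩
    · by_contra hcon
      push_neg at hcon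
      refine hL (famC_limit pt r f L fun m => ?_)
      obtain ⟨g, hg1, hg2, _⟩ := hcon (1/(m+1)) (by positivity)
      exact ⟨g, hg1, hg2⟩
  choose ηf hηf hprop using key
  haveI : Nonempty (Finset (Fin k)) := ⟨∅⟩
  refine ⟨Finset.univ.inf' Finset.univ_nonempty ηf, ?_, ?_⟩
  · exact (Finset.lt_inf'_iff _).mpr fun L _ => hηf L
  · intro g hg L hLg
    exact hprop L g (lt_of_lt_of_le hg (Finset.inf'_le _ (Finset.mem_univ L))) hLg

lemma famC_dense (hne : Nonempty X) {k : ℕ} (pt : Fin k → X) (r : ℝ) (f : Λ → X ≃ₜ X)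
    {η₀ : ℝ} (hη₀ : 0 < η₀) :
    ∃ f', rhoIFS f f' < η₀ ∧ ∃ η > (0:ℝ), ∀ g, rhoIFS f' g < η →
      famC pt r g = famC pt r f' := by
  classical
  set s : Set ℕ := {n | ∃ g, rhoIFS f g < η₀/2 ∧ (famC pt r g).ncard = n} with hs
  have hsne : s.Nonempty := ⟨(famC pt r f).ncard, f, by rw [rho_self hne]; positivity, rfl⟩
  obtain ⟨f', hρ', hcard⟩ := Nat.sInf_mem hsne
  obtain ⟨η₁, hη₁, husc⟩ := famC_usc pt r f'
  refine ⟨f', lt_of_lt_of_le hρ' (by linarith), min η₁ (η₀/2 - rhoIFS f f'), ?_, ?_⟩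
  · apply lt_min hη₁
    linarith
  · intro g hg
    have h1 : famC pt r g ⊆ famC pt r f' := husc g (lt_of_lt_of_le hg (min_le_left _ _))
    have h2 : rhoIFS f g < η₀/2 :=
      lt_of_le_of_lt (rho_triangle hne f f' g)
        (by have := lt_of_lt_of_le hg (min_le_right _ _); linarith)
    have h3 : (famC pt r g).ncard ∈ s := ⟨g, h2, rfl⟩
    have h4 : (famC pt r f').ncard ≤ (famC pt r g).ncard := hcard ▸ Nat.sInf_le h3
    exact Set.eq_of_subset_of_ncard_le h1 h4 (Set.toFinite _)

lemma ball_infinite (hni : ∀ x : X, ∀ r > (0:ℝ), ∃ z : X, z ≠ x ∧ dist z x < r)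
    (c : X) {r : ℝ} (hr : 0 < r) : (Metric.ball c r).Infinite := by
  classical
  by_contra hinf
  rw [Set.not_infinite] at hinf
  have hfin := hinf
  have hSfin : ((Metric.ball c r) \ {c}).Finite := hfin.diff
  rcases Set.eq_empty_or_nonempty ((Metric.ball c r) \ {c}) with hS | hS
  · obtain ⟨z, hz1, hz2⟩ := hni c r hr
    have : z ∈ (Metric.ball c r) \ {c} := ⟨Metric.mem_ball.mpr hz2, hz1⟩
    simp [hS] at this
  · set t := hSfin.toFinset with ht
    have htne : t.Nonempty := by
      rwa [← Set.Finite.toFinset_nonempty hSfin] at hS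
    set r' := t.inf' htne (fun s => dist s c) with hr'
    have hr'pos : 0 < r' := by
      rw [hr', Finset.lt_inf'_iff]
      intro b hb
      rw [ht, Set.Finite.mem_toFinset] at hb
      exact dist_pos.mpr hb.2
    obtain ⟨z, hz1, hz2⟩ := hni c (min r r') (lt_min hr hr'pos)
    have hzS : z ∈ t := by
      rw [ht, Set.Finite.mem_toFinset]
      exact ⟨Metric.mem_ball.mpr (hz2.trans_le (min_le_left _ _)), hz1⟩
    have : r' ≤ dist z c := Finset.inf'_le _ hzS
    have : dist z c < r' := hz2.trans_le (min_le_right _ _)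
    linarith [Finset.inf'_le (fun s => dist s c) hzS]

lemma exists_near_avoiding (hni : ∀ x : X, ∀ r > (0:ℝ), ∃ z : X, z ≠ x ∧ dist z x < r)
    (c : X) {r : ℝ} (hr : 0 < r) {F : Set X} (hF : F.Finite) :
    ∃ z, dist z c < r ∧ z ∉ F := by
  obtain ⟨z, hz⟩ := ((ball_infinite hni c hr).diff hF).nonempty
  exact ⟨z, Metric.mem_ball.mp hz.1, hz.2⟩

lemma exists_net {r : ℝ} (hr : 0 < r) :
    ∃ (k : ℕ) (pt : Fin k → X), ∀ z : X, ∃ j, dist z (pt j) < r := by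
  have htb : TotallyBounded (Set.univ : Set X) := isCompact_univ.totallyBounded
  obtain ⟨t, htfin, htcov⟩ := Metric.totallyBounded_iff.mp htb r hr
  classical
  set l := htfin.toFinset.toList with hl
  refine ⟨l.length, l.get, fun z => ?_⟩
  obtain ⟨y, hy, hzy⟩ := Set.mem_iUnion₂.mp (htcov (Set.mem_univ z))
  have hyl : y ∈ l := by
    rw [hl, Finset.mem_toList, Set.Finite.mem_toFinset]
    exact hy
  obtain ⟨i, hi⟩ := List.mem_iff_get.mp hyl
  exact ⟨i, by rw [hi]; exact Metric.mem_ball.mp hzy⟩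

/-- A uniform modulus of continuity for a finite family of maps on a compact space. -/
lemma unif_mod (F : Λ → X → X) (hF : ∀ l, Continuous (F l)) {c : ℝ} (hc : 0 < c) :
    ∃ δ > (0:ℝ), ∀ (l : Λ) (u v : X), dist u v ≤ δ → dist (F l u) (F l v) ≤ c := by
  classical
  haveI := Fintype.ofFinite Λ
  have huc : ∀ l : Λ, ∃ δ > (0:ℝ), ∀ u v : X, dist u v < δ → dist (F l u) (F l v) < c := by
    intro l
    have h0 : UniformContinuous (F l) := CompactSpace.uniformContinuous_of_continuous (hF l)
    rw [Metric.uniformContinuous_iff] at h0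
    obtain ⟨δ, hδ, h⟩ := h0 c hc
    exact ⟨δ, hδ, fun u v huv => h huv⟩
  choose δf hδf hprop using huc
  set δm := Finset.univ.inf' Finset.univ_nonempty δf with hδm
  have hδmpos : 0 < δm := (Finset.lt_inf'_iff _).mpr fun l _ => hδf l
  refine ⟨δm/2, by linarith, fun l u v huv => ?_⟩
  have : dist u v < δf l :=
    lt_of_le_of_lt huv (lt_of_lt_of_le (by linarith) (Finset.inf'_le _ (Finset.mem_univ l)))
  exact (hprop l u v this).le

lemma exists_distinct_pts (hni : ∀ x : X, ∀ r > (0:ℝ), ∃ z : X, z ≠ x ∧ dist z x < r)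
    (f : Λ → X ≃ₜ X) (z : ℕ → X) (τ : ℕ → Λ) {δ' : ℝ} (hδ' : 0 < δ') :
    ∀ p : ℕ, ∃ w : ℕ → X, (∀ i, dist (w i) (z i) < δ') ∧
      (∀ i j, i < p → j < p → i ≠ j → w i ≠ w j) ∧
      (∀ i j, i < p → j < p → i ≠ j → f (τ i) (w i) ≠ f (τ j) (w j)) := by
  intro p
  induction p with
  | zero => exact ⟨z, fun i => by simpa using hδ',
      fun i j hi => absurd hi (Nat.not_lt_zero i), fun i j hi => absurd hi (Nat.not_lt_zero i)⟩
  | succ p ih =>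
    obtain ⟨w, h1, h2, h3⟩ := ih
    classical
    set F : Set X := (w '' Set.Iio p) ∪
      ((f (τ p)).symm '' ((fun j => f (τ j) (w j)) '' Set.Iio p)) with hF
    have hFfin : F.Finite :=
      ((Set.finite_Iio p).image w).union (((Set.finite_Iio p).image _).image _)
    obtain ⟨v, hv1, hv2⟩ := exists_near_avoiding hni (z p) hδ' hFfin
    refine ⟨Function.update w p v, ?_, ?_, ?_⟩
    · intro i
      rcases eq_or_ne i p with rfl | hip
      · simpa using hv1
      · rw [Function.update_of_ne hip]; exact h1 i
    · intro i j hi hj hij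
      by_cases hip : i = p
      · subst hip
        have hjp : j ≠ i := fun h => hij h.symm
        rw [Function.update_self, Function.update_of_ne hjp]
        intro hvw
        exact hv2 (Or.inl ⟨j, Set.mem_Iio.mpr (by omega), hvw.symm⟩)
      · by_cases hjp : j = p
        · subst hjp
          rw [Function.update_self, Function.update_of_ne hip]
          intro hvw
          exact hv2 (Or.inl ⟨i, Set.mem_Iio.mpr (by omega), hvw⟩)
        · rw [Function.update_of_ne hip, Function.update_of_ne hjp]
          exact h2 i j (by omega) (by omega) hij
    · intro i j hi hj hij
      by_cases hip : i = p
      · subst hip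
        have hjp : j ≠ i := fun h => hij h.symm
        rw [Function.update_self, Function.update_of_ne hjp]
        intro hvw
        refine hv2 (Or.inr ⟨f (τ j) (w j), ⟨j, Set.mem_Iio.mpr (by omega), rfl⟩, ?_⟩)
        rw [← hvw, Homeomorph.symm_apply_apply]
      · by_cases hjp : j = p
        · subst hjp
          rw [Function.update_self, Function.update_of_ne hip]
          intro hvw
          refine hv2 (Or.inr ⟨f (τ i) (w i), ⟨i, Set.mem_Iio.mpr (by omega), rfl⟩, ?_⟩)
          rw [hvw, Homeomorph.symm_apply_apply]
        · rw [Function.update_of_ne hip, Function.update_of_ne hjp]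
          exact h3 i j (by omega) (by omega) hij

lemma ws_core (hni : ∀ x : X, ∀ r > (0:ℝ), ∃ z : X, z ≠ x ∧ dist z x < r)
    (hgh : GenHomogeneous X) (hne : Nonempty X)
    {k : ℕ} {pt : Fin k → X} {ε : ℝ} (hε : 0 < ε)
    (hnet : ∀ z : X, ∃ j, dist z (pt j) < ε/8)
    (f : Λ → X ≃ₜ X) {η : ℝ} (hη : 0 < η)
    (hloc : ∀ g, rhoIFS f g < η → famC pt (ε/4) g = famC pt (ε/4) f) :
    ∃ δ > (0:ℝ), ∀ x : ℤ → X, IsPseudoOrbitZ f δ x →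
      ∃ y : ℤ → X, IsOrbitZ f y ∧ ∀ n : ℤ, ∃ m : ℤ, dist (y n) (x m) < ε := by
  classical
  obtain ⟨η'', hη''pos, hη''⟩ := unif_mod (fun l => ((f l).symm : X → X))
    (fun l => (f l).symm.continuous) (c := η/2) (by linarith)
  set η' := min η'' (η/2) with hη'def
  have hη'pos : 0 < η' := lt_min hη''pos (by linarith)
  obtain ⟨δ₀, hδ₀pos, hδ₀⟩ := hgh η' hη'pos
  obtain ⟨δ'', hδ''pos, hδ''⟩ := unif_mod (fun l => ((f l) : X → X))
    (fun l => (f l).continuous) (c := δ₀/4) (by linarith)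
  set δ' := min δ'' (min (δ₀/4) (ε/8)) with hδ'def
  have hδ'pos : 0 < δ' := lt_min hδ''pos (lt_min (by linarith) (by linarith))
  refine ⟨δ₀/4, by linarith, ?_⟩
  rintro x ⟨σ, hx⟩
  -- pigeonhole: a closing pair
  obtain ⟨K, q, hq⟩ := exists_net (X := X) (show (0:ℝ) < δ₀/8 by linarith)
  have hKn : ∀ n : ℕ, ∃ j, dist (x n) (q j) < δ₀/8 := fun n => hq (x n)
  choose φ hφ using hKn
  obtain ⟨a0, b0, hab0, hfab⟩ := Finite.exists_ne_map_eq_of_infinite φ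
  have key : ∀ u v : ℕ, φ u = φ v → dist (x u) (x v) < δ₀/4 := by
    intro u v huv
    have h1 := hφ u
    have h2 := hφ v
    rw [huv] at h1
    calc dist (x u) (x v) ≤ dist (x u) (q (φ v)) + dist (q (φ v)) (x v) := dist_triangle _ _ _
      _ < δ₀/8 + δ₀/8 := by rw [dist_comm (q (φ v))]; exact add_lt_add h1 h2
      _ = δ₀/4 := by ring
  obtain ⟨a, b, hab, hxab⟩ : ∃ a b : ℕ, a < b ∧ dist (x a) (x b) < δ₀/4 := by
    rcases lt_or_gt_of_ne hab0 with h | h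
    · exact ⟨a0, b0, h, key _ _ hfab⟩
    · exact ⟨b0, a0, h, key _ _ hfab.symm⟩
  set p := b - a with hpdef
  have hppos : 0 < p := by omega
  set z : ℕ → X := fun i => x ((a + i : ℕ) : ℤ) with hzdef
  set τ : ℕ → Λ := fun i => σ (((a + i : ℕ) : ℤ)) with hτdef
  obtain ⟨w, hw1, hw2, hw3⟩ := exists_distinct_pts hni f z τ hδ'pos p
  -- the two tuples
  set A : Fin p → X := fun i => f (τ (i:ℕ)) (w (i:ℕ)) with hAdef
  set B : Fin p → X := fun i => w (((i:ℕ) + 1) % p) with hBdef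
  have hAinj : Function.Injective A := by
    intro i j hij
    by_contra hne'
    exact hw3 (i:ℕ) (j:ℕ) i.isLt j.isLt (fun hv => hne' (Fin.ext hv)) hij
  have hmodlt : ∀ i : Fin p, ((i:ℕ)+1) % p < p := fun i => Nat.mod_lt _ hppos
  have hmodinj : ∀ i j : Fin p, ((i:ℕ)+1) % p = ((j:ℕ)+1) % p → i = j := by
    intro i j h
    have hi := i.isLt; have hj := j.isLt
    apply Fin.ext
    rcases Nat.lt_or_ge ((i:ℕ)+1) p with h1 | h1 <;> rcases Nat.lt_or_ge ((j:ℕ)+1) p with h2 | h2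
    · rw [Nat.mod_eq_of_lt h1, Nat.mod_eq_of_lt h2] at h; omega
    · have e2 : (j:ℕ)+1 = p := by omega
      rw [Nat.mod_eq_of_lt h1, e2, Nat.mod_self] at h; omega
    · have e1 : (i:ℕ)+1 = p := by omega
      rw [Nat.mod_eq_of_lt h2, e1, Nat.mod_self] at h; omega
    · omega
  have hBinj : Function.Injective B := by
    intro i j hij
    by_contra hne'
    have hm : ((i:ℕ)+1)%p ≠ ((j:ℕ)+1)%p := fun hv => hne' (hmodinj i j hv)
    exact hw2 _ _ (hmodlt i) (hmodlt j) hm hij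
  have hδ'1 : δ' ≤ δ'' := min_le_left _ _
  have hδ'2 : δ' ≤ δ₀/4 := le_trans (min_le_right _ _) (min_le_left _ _)
  have hδ'3 : δ' ≤ ε/8 := le_trans (min_le_right _ _) (min_le_right _ _)
  have hdistAB : ∀ i : Fin p, dist (A i) (B i) ≤ δ₀ := by
    intro i
    have hwz : dist (f (τ (i:ℕ)) (w (i:ℕ))) (f (τ (i:ℕ)) (z (i:ℕ))) ≤ δ₀/4 :=
      hδ'' (τ (i:ℕ)) _ _ ((hw1 (i:ℕ)).le.trans hδ'1)
    by_cases hi : (i:ℕ)+1 < p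
    · have hBi : B i = w ((i:ℕ)+1) := by rw [hBdef]; simp [Nat.mod_eq_of_lt hi]
      have hstep : dist (f (τ (i:ℕ)) (z (i:ℕ))) (z ((i:ℕ)+1)) < δ₀/4 := by
        have hps := hx (((a + i : ℕ) : ℤ))
        have hcast : ((a + (i:ℕ) : ℕ) : ℤ) + 1 = ((a + ((i:ℕ)+1) : ℕ) : ℤ) := by push_cast; ring
        rw [hcast] at hps
        rw [dist_comm]
        exact hps
      have hwz2 : dist (z ((i:ℕ)+1)) (w ((i:ℕ)+1)) ≤ δ₀/4 := by
        rw [dist_comm]; exact (hw1 _).le.trans hδ'2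
      rw [hBi]
      calc dist (A i) (w ((i:ℕ)+1)) ≤
          dist (A i) (f (τ (i:ℕ)) (z (i:ℕ))) + dist (f (τ (i:ℕ)) (z (i:ℕ))) (z ((i:ℕ)+1))
            + dist (z ((i:ℕ)+1)) (w ((i:ℕ)+1)) := dist_triangle4 _ _ _ _
        _ ≤ δ₀/4 + δ₀/4 + δ₀/4 := by
            exact add_le_add (add_le_add hwz hstep.le) hwz2
        _ ≤ δ₀ := by linarith
    · have hip : (i:ℕ)+1 = p := by have := i.isLt; omega
      have hBi : B i = w 0 := by rw [hBdef]; simp [hip]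
      have hstep : dist (f (τ (i:ℕ)) (z (i:ℕ))) (x (b:ℤ)) < δ₀/4 := by
        have hps := hx (((a + i : ℕ) : ℤ))
        have hcast : ((a + (i:ℕ) : ℕ) : ℤ) + 1 = (b : ℤ) := by push_cast; omega
        rw [hcast] at hps
        rw [dist_comm]
        exact hps
      have hxba : dist (x (b:ℤ)) (x (a:ℤ)) < δ₀/4 := by rw [dist_comm]; exact hxab
      have hz0 : dist (x (a:ℤ)) (w 0) ≤ δ₀/4 := by
        have : dist (w 0) (z 0) < δ' := hw1 0
        have hz00 : z 0 = x (a:ℤ) := by rw [hzdef]; norm_num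
        rw [hz00] at this
        rw [dist_comm]
        exact this.le.trans hδ'2
      rw [hBi]
      calc dist (A i) (w 0) ≤ dist (A i) (x (b:ℤ)) + dist (x (b:ℤ)) (x (a:ℤ))
            + dist (x (a:ℤ)) (w 0) := dist_triangle4 _ _ _ _
        _ ≤ (δ₀/4 + δ₀/4) + δ₀/4 + δ₀/4 :=
            add_le_add (add_le_add ((dist_triangle _ (f (τ (i:ℕ)) (z (i:ℕ))) _).trans
              (add_le_add hwz hstep.le)) hxba.le) hz0
        _ = δ₀ := by ring
  obtain ⟨h, hhA, hhd⟩ := hδ₀ p A B hAinj hBinj hdistAB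
  set g : Λ → X ≃ₜ X := fun l => (f l).trans h with hgdef
  have hrho : rhoIFS f g < η := by
    have hle : rhoIFS f g ≤ η/2 := by
      refine rho_le_of_forall hne f g fun l u => max_le ?_ ?_
      · have h1 : dist (h (f l u)) (f l u) ≤ η' := le_trans (le_max_left _ _) (hhd (f l u))
        have h2 : dist (f l u) (g l u) = dist (f l u) (h (f l u)) := by
          rw [hgdef]; simp [Homeomorph.trans_apply]
        rw [h2, dist_comm]
        exact h1.trans (min_le_right _ _)
      · have h2 : dist (h.symm u) u ≤ η' := le_trans (le_max_right _ _) (hhd u)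
        have hgs : (g l).symm u = (f l).symm (h.symm u) := by
          rw [hgdef]; simp [Homeomorph.symm_trans_apply]
        rw [hgs, dist_comm]
        exact hη'' l (h.symm u) u (h2.trans (min_le_left _ _))
    linarith
  -- the periodic orbit of g
  set y : ℤ → X := fun n => w ((n % (p:ℤ)).toNat) with hydef
  have hmodint : ∀ n : ℤ, ((n % (p:ℤ)).toNat : ℤ) = n % (p:ℤ) ∧ (n % (p:ℤ)).toNat < p := by
    intro n
    have h1 : 0 ≤ n % (p:ℤ) := Int.emod_nonneg n (by exact_mod_cast hppos.ne')
    have h2 : n % (p:ℤ) < (p:ℤ) := Int.emod_lt_of_pos n (by exact_mod_cast hppos)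
    omega
  have hidx : ∀ n : ℤ, ((n+1) % (p:ℤ)).toNat = ((n % (p:ℤ)).toNat + 1) % p := by
    intro n
    set i := (n % (p:ℤ)).toNat with hidef
    have hi : (i:ℤ) = n % (p:ℤ) := (hmodint n).1
    have e1 : (n+1) % (p:ℤ) = ((n % p) + 1) % p := by
      conv_lhs => rw [Int.add_emod]
      conv_rhs => rw [Int.add_emod, Int.emod_emod_of_dvd n dvd_rfl]
    rw [e1, ← hi]
    have e2 : ((i:ℤ) + 1) % (p:ℤ) = (((i+1) % p : ℕ) : ℤ) := by push_cast; ring_nf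
    rw [e2, Int.toNat_natCast]
  have horb : IsOrbitZ g y := by
    refine ⟨fun n => τ ((n % (p:ℤ)).toNat), fun n => ?_⟩
    have hilt : (n % (p:ℤ)).toNat < p := (hmodint n).2
    have hstep : g (τ ((n % (p:ℤ)).toNat)) (w ((n % (p:ℤ)).toNat))
        = w (((n % (p:ℤ)).toNat + 1) % p) := by
      have h1 : g (τ ((n % (p:ℤ)).toNat)) (w ((n % (p:ℤ)).toNat)) = h (A ⟨_, hilt⟩) := by
        rw [hgdef, hAdef]; simp [Homeomorph.trans_apply]
      rw [h1, hhA ⟨_, hilt⟩, hBdef]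
    show y (n+1) = g (τ ((n % (p:ℤ)).toNat)) (y n)
    rw [hydef]
    simp only []
    rw [hstep, hidx n]
  -- the index set L
  set L : Finset (Fin k) := Finset.univ.filter (fun j => ∃ m : ℤ, dist (x m) (pt j) < ε/8)
    with hLdef
  have hLg : L ∈ famC pt (ε/4) g := by
    refine ⟨y, horb, fun n => ?_⟩
    have hilt : (n % (p:ℤ)).toNat < p := (hmodint n).2
    obtain ⟨j, hj⟩ := hnet (z ((n % (p:ℤ)).toNat))
    have hjL : j ∈ L := by
      rw [hLdef, Finset.mem_filter]
      exact ⟨Finset.mem_univ _, ⟨((a + (n % (p:ℤ)).toNat : ℕ) : ℤ), hj⟩⟩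
    refine ⟨j, hjL, ?_⟩
    have htr : dist (y n) (pt j) ≤ dist (w ((n % (p:ℤ)).toNat)) (z ((n % (p:ℤ)).toNat))
        + dist (z ((n % (p:ℤ)).toNat)) (pt j) := dist_triangle _ _ _
    have hb1 : dist (w ((n % (p:ℤ)).toNat)) (z ((n % (p:ℤ)).toNat)) ≤ ε/8 :=
      (hw1 _).le.trans hδ'3
    linarith [hj.le]
  have hLf : L ∈ famC pt (ε/4) f := (hloc g hrho) ▸ hLg
  obtain ⟨Y, hYorb, hYin⟩ := hLf
  refine ⟨Y, hYorb, fun n => ?_⟩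
  obtain ⟨j, hjL, hjd⟩ := hYin n
  rw [hLdef, Finset.mem_filter] at hjL
  obtain ⟨-, m, hm⟩ := hjL
  refine ⟨m, ?_⟩
  calc dist (Y n) (x m) ≤ dist (Y n) (pt j) + dist (pt j) (x m) := dist_triangle _ _ _
    _ < ε/4 + ε/8 := by rw [dist_comm (pt j)]; exact add_lt_add_of_le_of_lt hjd hm
    _ < ε := by linarith

end Aux

/-- On a compact, generalized homogeneous metric space with no isolated points, the weak
shadowing property on `ℤ` is generic in `(H_Λ(X), ρ)`: the set of IFS with weak shadowing
contains a countable intersection of `ρ`-open `ρ`-dense sets. -/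

theorem weakShadowing_generic
    {X Λ : Type*} [MetricSpace X] [CompactSpace X] [Finite Λ] [Nonempty Λ]
    (hgh : GenHomogeneous X)
    (hni : ∀ x : X, ∀ r > (0 : ℝ), ∃ z : X, z ≠ x ∧ dist z x < r) :
    ∃ S : ℕ → Set (Λ → X ≃ₜ X),
      (∀ n, ∀ f ∈ S n, ∃ η > (0 : ℝ), ∀ g : Λ → X ≃ₜ X, rhoIFS f g < η → g ∈ S n) ∧
      (∀ n, ∀ f : Λ → X ≃ₜ X, ∀ η > (0 : ℝ), ∃ g ∈ S n, rhoIFS f g < η) ∧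
      (⋂ n, S n) ⊆ {f : Λ → X ≃ₜ X | WeakShadowingZ f} := by
  classical
  rcases isEmpty_or_nonempty X with hemp | hne
  · refine ⟨fun _ => Set.univ, ?_, ?_, ?_⟩
    · intro n f _
      exact ⟨1, one_pos, fun g _ => Set.mem_univ g⟩
    · intro n f η hη
      refine ⟨f, Set.mem_univ f, ?_⟩
      have hz : rhoIFS f f = 0 := by
        haveI : IsEmpty (Λ × X) := by infer_instance
        rw [rhoIFS]
        exact Real.iSup_of_isEmpty _
      rw [hz]; exact hη
    · intro f _ ε hε
      exact ⟨1, one_pos, fun x _ => (IsEmpty.false (x 0)).elim⟩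
  · have hne' : Nonempty X := hne
    have hnets : ∀ n : ℕ, ∃ (k : ℕ) (pt : Fin k → X),
        ∀ z : X, ∃ j, dist z (pt j) < (1/(n+1) : ℝ)/8 := fun n => exists_net (by positivity)
    choose kf ptf hptf using hnets
    refine ⟨fun n => {f | ∃ η > (0:ℝ), ∀ g, rhoIFS f g < η →
      famC (ptf n) ((1/(n+1) : ℝ)/4) g = famC (ptf n) ((1/(n+1) : ℝ)/4) f}, ?_, ?_, ?_⟩
    · rintro n f ⟨η, hη, hloc⟩
      refine ⟨η/2, by linarith, fun g hg => ⟨η/2, by linarith, fun g' hg' => ?_⟩⟩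
      have h1 : rhoIFS f g' < η := lt_of_le_of_lt (rho_triangle hne' f g g') (by linarith)
      rw [hloc g' h1, hloc g (by linarith)]
    · intro n f η hη
      obtain ⟨f', h1, h2⟩ := famC_dense hne' (ptf n) ((1/(n+1) : ℝ)/4) f hη
      exact ⟨f', h2, h1⟩
    · intro f hf
      simp only [Set.mem_iInter] at hf
      intro ε₀ hε₀
      obtain ⟨n, hn⟩ := exists_nat_one_div_lt hε₀
      obtain ⟨η, hη, hloc⟩ := hf n
      have hεn : (0:ℝ) < 1/(n+1) := by positivity
      obtain ⟨δ, hδ, hws⟩ := ws_core hni hgh hne' hεn (hptf n) f hη hloc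
      refine ⟨δ, hδ, fun x hx => ?_⟩
      obtain ⟨y, hyo, hyd⟩ := hws x hx
      exact ⟨y, hyo, fun m => (hyd m).imp fun m' h => h.trans hn⟩
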